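/- If G is a finitely generated nilpotent group and the centralizer of some finitely generated subgroup of G is finite, then G is finite. -/

import Mathlib

open Subgroup
open scoped commutatorElement

/-- If `G` is finitely generated with finite center, then the center of `G ⧸ center G`
is finite. -/
lemma finite_center_quotient_center {G : Type*} [Group G] [Group.FG G]
    (hZ : Finite (Subgroup.center G)) :
    Finite (Subgroup.center (G ⧸ Subgroup.center G)) := by
  obtain ⟨S, hS, hSfin⟩ := Group.fg_iff.mp ‹Group.FG G›
  -- map an element of the center of the quotient to the tuple of commutators with generators
  have key : ∀ (z : G ⧸ Subgroup.center G), z ∈ Subgroup.center _ →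
      ∀ g : G, ⁅z.out, g⁆ ∈ Subgroup.center G := by
    intro z hz g
    rw [← QuotientGroup.eq_one_iff]
    have : (QuotientGroup.mk ⁅z.out, g⁆ : G ⧸ Subgroup.center G)
        = ⁅z, (g : G ⧸ Subgroup.center G)⁆ := by
      simp only [commutatorElement_def, QuotientGroup.mk_mul, QuotientGroup.mk_inv,
        QuotientGroup.out_eq']
    rw [this]
    exact commutatorElement_eq_one_iff_commute.mpr
      ((Subgroup.mem_center_iff.mp hz _).symm)
  haveI := hSfin.to_subtype
  set f : Subgroup.center (G ⧸ Subgroup.center G) → (S → Subgroup.center G) :=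
    fun z s => ⟨⁅(z : G ⧸ Subgroup.center G).out, (s : G)⁆, key z z.2 s⟩ with hf
  have hinj : Function.Injective f := by
    intro z₁ z₂ h
    have hcomm : ∀ g ∈ S, g * ((z₁ : G ⧸ Subgroup.center G).out⁻¹ *
        (z₂ : G ⧸ Subgroup.center G).out)
        = ((z₁ : G ⧸ Subgroup.center G).out⁻¹ * (z₂ : G ⧸ Subgroup.center G).out) * g := by
      intro g hg
      have h1 : ⁅(z₁ : G ⧸ Subgroup.center G).out, g⁆
          = ⁅(z₂ : G ⧸ Subgroup.center G).out, g⁆ := by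
        have := congrFun h ⟨g, hg⟩
        simpa [hf] using congrArg Subtype.val this
      set a := (z₁ : G ⧸ Subgroup.center G).out
      set b := (z₂ : G ⧸ Subgroup.center G).out
      have h2 : a * g * a⁻¹ = b * g * b⁻¹ := by
        have := h1
        simp only [commutatorElement_def] at this
        exact mul_right_cancel this
      have : g * (a⁻¹ * b) = a⁻¹ * (b * g * b⁻¹) * b := by
        rw [← h2]; group
      rw [this]; group
    have hcen : (z₁ : G ⧸ Subgroup.center G).out⁻¹ * (z₂ : G ⧸ Subgroup.center G).out
        ∈ Subgroup.center G := by
      rw [Subgroup.mem_center_iff]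
      intro g
      have hg : g ∈ Subgroup.closure S := by rw [hS]; trivial
      revert hg
      refine Subgroup.closure_induction ?_ ?_ ?_ ?_
      · exact fun x hx => hcomm x hx
      · simp
      · intro x y _ _ hx hy
        rw [mul_assoc, hy, ← mul_assoc, hx, mul_assoc]
      · intro x _ hx
        have := congrArg (fun t => x⁻¹ * t * x⁻¹) hx
        simpa [mul_assoc] using this.symm
    ext
    rw [← QuotientGroup.out_eq' (z₁ : G ⧸ Subgroup.center G),
      ← QuotientGroup.out_eq' (z₂ : G ⧸ Subgroup.center G)]
    exact (QuotientGroup.eq ).mpr hcen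
  exact Finite.of_injective f hinj

/-- A finitely generated nilpotent group with finite center is finite:
induction on the nilpotency class. -/
lemma finite_of_fg_nilpotent_finite_center :
    ∀ (n : ℕ) (G : Type u) [Group G] [Group.IsNilpotent G] [Group.FG G],
      Group.nilpotencyClass G ≤ n → Finite (Subgroup.center G) → Finite G := by
  intro n
  induction n with
  | zero =>
    intro G _ _ _ hn _
    have : Group.nilpotencyClass G = 0 := Nat.le_zero.mp hn
    have : Subsingleton G := nilpotencyClass_zero_iff_subsingleton.mp this
    exact Finite.of_subsingleton
  | succ n ih =>
    intro G _ _ _ hn hZ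
    haveI : Finite (Subgroup.center (G ⧸ Subgroup.center G)) :=
      finite_center_quotient_center hZ
    have hq : Group.nilpotencyClass (G ⧸ Subgroup.center G) ≤ n := by
      rw [nilpotencyClass_quotient_center]
      omega
    haveI : Finite (G ⧸ Subgroup.center G) := ih (G ⧸ Subgroup.center G) hq ‹_›
    haveI := hZ
    exact Finite.of_subgroup_quotient (Subgroup.center G)

theorem finite_of_fg_nilpotent_finite_centralizer {G : Type*} [Group G]
    [Group.IsNilpotent G] [Group.FG G] (H : Subgroup G) (hH : H.FG)
    (hC : Finite (Subgroup.centralizer (H : Set G))) :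
    Finite G := by
  have hle : Subgroup.center G ≤ Subgroup.centralizer (H : Set G) :=
    Subgroup.center_le_centralizer _
  haveI : Finite (Subgroup.center G) :=
    Finite.of_injective (Subgroup.inclusion hle) (Subgroup.inclusion_injective hle)
  exact finite_of_fg_nilpotent_finite_center (Group.nilpotencyClass G) G le_rfl ‹_›
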